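/- For every ε > 0 and integer ℓ ≥ 2 odd, there exists t_0 such that for all t ≥ t_0 and all sufficiently large m ≤ n, the Zarankiewicz number satisfies z(m, n, θ_{t,ℓ}) ≥ c·(mn)^{(ℓ+1)/(2ℓ) − ε} for some constant c > 0, where θ_{t,ℓ} is the theta graph consisting of t internally disjoint paths of length ℓ between two fixed vertices. -/

import Mathlib

/-- The theta graph `θ_{t,ℓ}`: `t` internally disjoint paths of length `ℓ` between two
fixed vertices (`Sum.inl false` and `Sum.inl true`); `Sum.inr (i, j)` is the `j`-th internal
vertex of the `i`-th path. -/
def thetaGraph (t ℓ : ℕ) : SimpleGraph (Bool ⊕ Fin t × Fin (ℓ - 1)) :=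
  SimpleGraph.fromRel fun a b =>
    match a, b with
    | Sum.inl false, Sum.inr (_, j) => j.val = 0
    | Sum.inl true, Sum.inr (_, j) => j.val = ℓ - 2
    | Sum.inr (i, j), Sum.inr (i', j') => i = i' ∧ j'.val = j.val + 1
    | _, _ => False

/-- A graph `G` contains a copy of `F` if there is an injective map preserving adjacency. -/
def ContainsCopy {W V : Type*} (F : SimpleGraph W) (G : SimpleGraph V) : Prop :=
  ∃ f : W → V, Function.Injective f ∧ ∀ x y, F.Adj x y → G.Adj (f x) (f y)

namespace ZLower
open Finset

/-- bipartite host graph determined by a set of cross pairs -/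
def bip (m n : ℕ) (S : Finset (Fin m × Fin n)) : SimpleGraph (Fin m ⊕ Fin n) :=
  SimpleGraph.fromRel fun u v =>
    match u, v with
    | Sum.inl a, Sum.inr b => (a, b) ∈ S
    | _, _ => False

variable {m n t ℓ : ℕ}

lemma bip_adj_inl_inr {S : Finset (Fin m × Fin n)} {a : Fin m} {b : Fin n} :
    (bip m n S).Adj (Sum.inl a) (Sum.inr b) ↔ (a, b) ∈ S := by
  simp [bip, SimpleGraph.fromRel_adj]

lemma bip_not_adj_inl {S : Finset (Fin m × Fin n)} (a b : Fin m) :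
    ¬ (bip m n S).Adj (Sum.inl a) (Sum.inl b) := by
  simp [bip, SimpleGraph.fromRel_adj]

lemma bip_not_adj_inr {S : Finset (Fin m × Fin n)} (a b : Fin n) :
    ¬ (bip m n S).Adj (Sum.inr a) (Sum.inr b) := by
  simp [bip, SimpleGraph.fromRel_adj]

lemma bip_adj_cases {S : Finset (Fin m × Fin n)} {u v : Fin m ⊕ Fin n}
    (h : (bip m n S).Adj u v) :
    ∃ a b, (a, b) ∈ S ∧ ((u = Sum.inl a ∧ v = Sum.inr b) ∨ (u = Sum.inr b ∧ v = Sum.inl a)) := by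
  cases u with
  | inl a =>
    cases v with
    | inl a' => exact absurd h (bip_not_adj_inl a a')
    | inr b => exact ⟨a, b, bip_adj_inl_inr.1 h, Or.inl ⟨rfl, rfl⟩⟩
  | inr b =>
    cases v with
    | inl a => exact ⟨a, b, bip_adj_inl_inr.1 h.symm, Or.inr ⟨rfl, rfl⟩⟩
    | inr b' => exact absurd h (bip_not_adj_inr b b')

lemma bip_mono {S S' : Finset (Fin m × Fin n)} (h : S ⊆ S') {u v : Fin m ⊕ Fin n}
    (hadj : (bip m n S).Adj u v) : (bip m n S').Adj u v := by
  rcases bip_adj_cases hadj with ⟨a, b, hab, hcase | hcase⟩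
  · rw [hcase.1, hcase.2]; exact bip_adj_inl_inr.2 (h hab)
  · rw [hcase.1, hcase.2]; exact (bip_adj_inl_inr.2 (h hab)).symm

/-- first endpoint of the `j`-th edge of the `i`-th path -/
def eA (ℓ : ℕ) (i : Fin t) (j : Fin ℓ) : Bool ⊕ Fin t × Fin (ℓ - 1) :=
  if h : j.val = 0 then Sum.inl false
  else Sum.inr (i, ⟨j.val - 1, by have := j.isLt; omega⟩)

/-- second endpoint of the `j`-th edge of the `i`-th path -/
def eB (ℓ : ℕ) (i : Fin t) (j : Fin ℓ) : Bool ⊕ Fin t × Fin (ℓ - 1) :=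
  if h : j.val = ℓ - 1 then Sum.inl true
  else Sum.inr (i, ⟨j.val, by have := j.isLt; omega⟩)

lemma theta_adj (hℓ : 3 ≤ ℓ) (i : Fin t) (j : Fin ℓ) :
    (thetaGraph t ℓ).Adj (eA ℓ i j) (eB ℓ i j) := by
  have hj := j.isLt
  rw [eA, eB, thetaGraph]
  split_ifs with h1 h2 h2
  · omega
  · -- j = 0, first edge
    rw [SimpleGraph.fromRel_adj]
    exact ⟨by simp, Or.inl (by simpa using h1)⟩
  · -- j = ℓ - 1, last edge
    rw [SimpleGraph.fromRel_adj]
    refine ⟨by simp, Or.inr ?_⟩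
    show (⟨j.val - 1, _⟩ : Fin (ℓ - 1)).val = ℓ - 2
    simp; omega
  · -- middle edge
    rw [SimpleGraph.fromRel_adj]
    constructor
    · simp [Fin.ext_iff]; omega
    · exact Or.inl ⟨rfl, by simp; omega⟩

lemma eAB_inj (hℓ : 3 ≤ ℓ) (i i' : Fin t) (j j' : Fin ℓ)
    (h : (eA ℓ i j = eA ℓ i' j' ∧ eB ℓ i j = eB ℓ i' j') ∨
         (eA ℓ i j = eB ℓ i' j' ∧ eB ℓ i j = eA ℓ i' j')) :
    i = i' ∧ j = j' := by
  have hj := j.isLt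
  have hj' := j'.isLt
  rw [eA, eA, eB, eB] at h
  split_ifs at h with h1 h2 h3 h4 h3 h4 h4 h4 <;>
    simp_all [Fin.ext_iff] <;> omega


def sideOf : Fin m ⊕ Fin n → Bool := fun u => match u with
  | .inl _ => false
  | .inr _ => true

def cls : Bool ⊕ Fin t × Fin (ℓ - 1) → Bool := fun v => match v with
  | .inl b => b
  | .inr (_, j) => decide (j.val % 2 = 0)

lemma bip_adj_side {S : Finset (Fin m × Fin n)} {u v : Fin m ⊕ Fin n}
    (h : (bip m n S).Adj u v) : sideOf u = !(sideOf v) := by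
  rcases bip_adj_cases h with ⟨a, b, _, ⟨h1, h2⟩ | ⟨h1, h2⟩⟩ <;> subst h1 <;> subst h2 <;> rfl

/-- any copy of the theta graph in a bipartite host is aligned with the 2-coloring `cls` -/
lemma copy_aligned (hℓ : 3 ≤ ℓ) (hodd : ℓ % 2 = 1) (ht : 0 < t)
    (f : (Bool ⊕ Fin t × Fin (ℓ - 1)) → Fin m ⊕ Fin n) (S : Finset (Fin m × Fin n))
    (hcopy : ∀ x y, (thetaGraph t ℓ).Adj x y → (bip m n S).Adj (f x) (f y)) :
    ∀ v, sideOf (f v) = xor (sideOf (f (Sum.inl false))) (cls v) := by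
  set b := sideOf (f (Sum.inl false)) with hb
  have key : ∀ k : ℕ, ∀ hk : k < ℓ - 1, ∀ i : Fin t,
      sideOf (f (Sum.inr (i, ⟨k, hk⟩))) = xor b (decide (k % 2 = 0)) := by
    intro k
    induction k with
    | zero =>
      intro hk i
      have hadj : (thetaGraph t ℓ).Adj (Sum.inl false) (Sum.inr (i, ⟨0, hk⟩)) := by
        rw [thetaGraph, SimpleGraph.fromRel_adj]
        exact ⟨by simp, Or.inl rfl⟩
      have := bip_adj_side (hcopy _ _ hadj)
      simp only [← hb] at this
      cases hx : sideOf (f (Sum.inr (i, ⟨0, hk⟩))) <;> cases hbv : b <;>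
        simp [hx, hbv] at this ⊢
    | succ k ih =>
      intro hk i
      have hk' : k < ℓ - 1 := by omega
      have hadj : (thetaGraph t ℓ).Adj (Sum.inr (i, ⟨k, hk'⟩)) (Sum.inr (i, ⟨k + 1, hk⟩)) := by
        rw [thetaGraph, SimpleGraph.fromRel_adj]
        refine ⟨by simp, Or.inl ⟨rfl, rfl⟩⟩
      have hside := bip_adj_side (hcopy _ _ hadj)
      have hpar : decide ((k + 1) % 2 = 0) = !(decide (k % 2 = 0)) := by
        rcases Nat.even_or_odd k with he | he
        · have h1 : k % 2 = 0 := Nat.even_iff.1 he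
          have h2 : ¬ ((k+1) % 2 = 0) := by omega
          simp [h1, h2]
        · have h1 : ¬ (k % 2 = 0) := by have := Nat.odd_iff.1 he; omega
          have h2 : (k+1) % 2 = 0 := by have := Nat.odd_iff.1 he; omega
          simp [h1, h2]
      rw [ih hk' i] at hside
      have : sideOf (f (Sum.inr (i, ⟨k+1, hk⟩))) = !(xor b (decide (k % 2 = 0))) := by
        cases hx : sideOf (f (Sum.inr (i, ⟨k+1, hk⟩))) <;>
          cases hy : xor b (decide (k % 2 = 0)) <;> simp_all
      rw [this, hpar, Bool.xor_not]
  intro v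
  match v with
  | .inl false => simp [cls]; exact hb.symm
  | .inl true =>
    have hlt : ℓ - 2 < ℓ - 1 := by omega
    have hadj : (thetaGraph t ℓ).Adj (Sum.inl true) (Sum.inr (⟨0, ht⟩, ⟨ℓ - 2, hlt⟩)) := by
      rw [thetaGraph, SimpleGraph.fromRel_adj]
      exact ⟨by simp, Or.inl rfl⟩
    have hside := bip_adj_side (hcopy _ _ hadj)
    rw [key (ℓ - 2) hlt ⟨0, ht⟩] at hside
    have hpar : decide ((ℓ - 2) % 2 = 0) = false := by
      simp; omega
    rw [hpar] at hside
    simp only [Bool.xor_false] at hside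
    rw [hside]
    cases b <;> simp [cls]
  | .inr (i, j) =>
    have := key j.val j.isLt i
    simpa [cls] using this

set_option maxHeartbeats 1000000 in
lemma card_filter_side (hm : 0 < m) (hn : 0 < n)
    (g : (Bool ⊕ Fin t × Fin (ℓ - 1)) → Bool) :
    (univ.filter fun f : (Bool ⊕ Fin t × Fin (ℓ - 1)) → Fin m ⊕ Fin n =>
        ∀ v, sideOf (f v) = g v).card ≤
      m ^ (univ.filter fun v => g v = false).card *
        n ^ (univ.filter fun v => g v = true).card := by
  have hcard : Fintype.card (({v : Bool ⊕ Fin t × Fin (ℓ - 1) // g v = false} → Fin m) ×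
      ({v : Bool ⊕ Fin t × Fin (ℓ - 1) // g v = true} → Fin n)) =
      m ^ (univ.filter fun v => g v = false).card *
        n ^ (univ.filter fun v => g v = true).card := by
    rw [Fintype.card_prod, Fintype.card_fun, Fintype.card_fun, Fintype.card_fin,
      Fintype.card_fin, Fintype.card_subtype, Fintype.card_subtype]
  calc (univ.filter fun f : (Bool ⊕ Fin t × Fin (ℓ - 1)) → Fin m ⊕ Fin n => ∀ v, sideOf (f v) = g v).card
      ≤ (univ : Finset (({v : Bool ⊕ Fin t × Fin (ℓ - 1) // g v = false} → Fin m) ×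
          ({v : Bool ⊕ Fin t × Fin (ℓ - 1) // g v = true} → Fin n))).card := by
        apply Finset.card_le_card_of_injOn
          (fun f => (fun v => ((f v.1).getLeft?).getD ⟨0, hm⟩,
                     fun v => ((f v.1).getRight?).getD ⟨0, hn⟩))
          (fun _ _ => mem_univ _)
        intro f hf f' hf' heq
        simp only [mem_coe, mem_filter, mem_univ, true_and] at hf hf'
        funext v
        have h1 := congrFun (congrArg Prod.fst heq)
        have h2 := congrFun (congrArg Prod.snd heq)
        cases hgv : g v with
        | false =>
          have hv := hf v; have hv' := hf' v
          rw [hgv] at hv hv'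
          cases hx : f v with
          | inl a =>
            cases hx' : f' v with
            | inl a' =>
              have := h1 ⟨v, hgv⟩
              simp only [hx, hx'] at this
              simp only [Sum.getLeft?] at this
              simp at this; rw [this]
            | inr b' => rw [hx'] at hv'; simp [sideOf] at hv'
          | inr b => rw [hx] at hv; simp [sideOf] at hv
        | true =>
          have hv := hf v; have hv' := hf' v
          rw [hgv] at hv hv'
          cases hx : f v with
          | inr a =>
            cases hx' : f' v with
            | inr a' =>
              have := h2 ⟨v, hgv⟩
              simp only [hx, hx'] at this
              simp only [Sum.getRight?] at this
              simp at this; rw [this]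
            | inl b' => rw [hx'] at hv'; simp [sideOf] at hv'
          | inl b => rw [hx] at hv; simp [sideOf] at hv
    _ = _ := by rw [card_univ, hcard]


lemma card_fin_odd (M q : ℕ) (h : M = 2 * q) :
    (univ.filter fun j : Fin M => j.val % 2 = 1).card = q := by
  rw [← Fintype.card_fin q]
  apply Finset.card_bij' (fun (j : Fin M) _ => (⟨j.val / 2, by have := j.isLt; omega⟩ : Fin q))
    (fun (k : Fin q) _ => (⟨2 * k.val + 1, by have := k.isLt; omega⟩ : Fin M)) <;>
    intro a ha <;> simp_all [Fin.ext_iff] <;> omega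

lemma card_fin_even (M q : ℕ) (h : M = 2 * q) :
    (univ.filter fun j : Fin M => j.val % 2 = 0).card = q := by
  rw [← Fintype.card_fin q]
  apply Finset.card_bij' (fun (j : Fin M) _ => (⟨j.val / 2, by have := j.isLt; omega⟩ : Fin q))
    (fun (k : Fin q) _ => (⟨2 * k.val, by have := k.isLt; omega⟩ : Fin M)) <;>
    intro a ha <;> simp_all [Fin.ext_iff] <;> omega

lemma card_cls_false (q : ℕ) (h : ℓ - 1 = 2 * q) :
    (univ.filter fun v : Bool ⊕ Fin t × Fin (ℓ - 1) => cls v = false).card = 1 + t * q := by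
  classical
  rw [← Fintype.card_subtype]
  rw [Fintype.card_congr (Equiv.subtypeSum (p := fun v : Bool ⊕ Fin t × Fin (ℓ - 1) => cls v = false))]
  have h1 : Fintype.card {b : Bool // cls (t := t) (ℓ := ℓ) (Sum.inl b) = false} = 1 := by
    have : (fun b : Bool => cls (t := t) (ℓ := ℓ) (Sum.inl b) = false) = fun b : Bool => b = false := by
      funext b; rfl
    rw [Fintype.card_subtype]
    simp only [this]
    rw [← Fintype.card_subtype]
    exact Fintype.card_subtype_eq false
  have h2 : Fintype.card {x : Fin t × Fin (ℓ - 1) // cls (Sum.inr x) = false} = t * q := by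
    rw [Fintype.card_subtype]
    have : (univ.filter fun x : Fin t × Fin (ℓ - 1) => cls (Sum.inr x) = false)
        = univ ×ˢ (univ.filter fun j : Fin (ℓ - 1) => j.val % 2 = 1) := by
      rw [← Finset.univ_product_univ, ← Finset.filter_product_right]
      apply Finset.filter_congr
      intro x _
      cases x with
      | mk i j => first
        | (simp [cls]; omega)
        | simp [cls]
    rw [this, Finset.card_product, Finset.card_univ, Fintype.card_fin, card_fin_odd _ q h]
  rw [Fintype.card_sum, h1, h2]

lemma card_cls_true (q : ℕ) (h : ℓ - 1 = 2 * q) :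
    (univ.filter fun v : Bool ⊕ Fin t × Fin (ℓ - 1) => cls v = true).card = 1 + t * q := by
  classical
  rw [← Fintype.card_subtype]
  rw [Fintype.card_congr (Equiv.subtypeSum (p := fun v : Bool ⊕ Fin t × Fin (ℓ - 1) => cls v = true))]
  have h1 : Fintype.card {b : Bool // cls (t := t) (ℓ := ℓ) (Sum.inl b) = true} = 1 := by
    have : (fun b : Bool => cls (t := t) (ℓ := ℓ) (Sum.inl b) = true) = fun b : Bool => b = true := by
      funext b; rfl
    rw [Fintype.card_subtype]
    simp only [this]
    rw [← Fintype.card_subtype]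
    exact Fintype.card_subtype_eq true
  have h2 : Fintype.card {x : Fin t × Fin (ℓ - 1) // cls (Sum.inr x) = true} = t * q := by
    rw [Fintype.card_subtype]
    have : (univ.filter fun x : Fin t × Fin (ℓ - 1) => cls (Sum.inr x) = true)
        = univ ×ˢ (univ.filter fun j : Fin (ℓ - 1) => j.val % 2 = 0) := by
      rw [← Finset.univ_product_univ, ← Finset.filter_product_right]
      apply Finset.filter_congr
      intro x _
      cases x with
      | mk i j => simp [cls]
    rw [this, Finset.card_product, Finset.card_univ, Fintype.card_fin, card_fin_even _ q h]
  rw [Fintype.card_sum, h1, h2]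


variable {α : Type*} [Fintype α] [DecidableEq α] {p : ℝ}

/-- Bernoulli weight of a subset -/
noncomputable def wt (p : ℝ) (s S : Finset α) : ℝ := p ^ S.card * (1 - p) ^ (s \ S).card

lemma wsum_base (p : ℝ) (s : Finset α) : ∑ S ∈ s.powerset, wt p s S = 1 := by
  have h := Finset.prod_add (fun _ : α => p) (fun _ : α => 1 - p) s
  simp only [prod_const] at h
  have h2 : p + (1 - p) = 1 := by ring
  rw [h2, one_pow] at h
  rw [show (1:ℝ) = ∑ x ∈ s.powerset, p ^ x.card * (1 - p) ^ (s \ x).card from h]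
  rfl

lemma wsum_supset (p : ℝ) (T : Finset α) :
    ∑ S ∈ (univ : Finset α).powerset.filter (fun S => T ⊆ S), wt p univ S = p ^ T.card := by
  have hbase := wsum_base p (univ \ T)
  have hswap : ∑ S ∈ (univ : Finset α).powerset.filter (fun S => T ⊆ S), wt p univ S
      = ∑ R ∈ (univ \ T).powerset, p ^ T.card * wt p (univ \ T) R := by
    apply Finset.sum_nbij' (fun S => S \ T) (fun R => T ∪ R)
    · intro S hS
      simp only [mem_filter, mem_powerset] at hS
      simp only [mem_powerset]
      exact sdiff_subset_sdiff hS.1 (le_refl T)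
    · intro R hR
      simp only [mem_powerset] at hR
      simp only [mem_filter, mem_powerset]
      exact ⟨subset_univ _, subset_union_left⟩
    · intro S hS
      simp only [mem_filter, mem_powerset] at hS
      exact union_sdiff_of_subset hS.2
    · intro R hR
      simp only [mem_powerset] at hR
      apply union_sdiff_cancel_left
      exact disjoint_of_subset_right hR disjoint_sdiff
    · intro S hS
      simp only [mem_filter, mem_powerset] at hS
      have hdis : Disjoint T (S \ T) := disjoint_sdiff
      have hcard : S.card = T.card + (S \ T).card := by
        rw [← card_union_of_disjoint hdis, union_sdiff_of_subset hS.2]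
      have hs2 : univ \ S = (univ \ T) \ (S \ T) := by
        rw [sdiff_sdiff_left]
        congr 1
        rw [sup_eq_union, union_sdiff_of_subset hS.2]
      rw [wt, wt, hcard, hs2, pow_add]
      ring
  rw [hswap, ← Finset.mul_sum, hbase, mul_one]

lemma wsum_mem (p : ℝ) (a : α) :
    ∑ S ∈ (univ : Finset α).powerset, (if a ∈ S then wt p univ S else 0) = p := by
  rw [← Finset.sum_filter]
  have : (univ : Finset α).powerset.filter (fun S => a ∈ S)
      = (univ : Finset α).powerset.filter (fun S => {a} ⊆ S) := by
    apply filter_congr; intro S _; simp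
  rw [this, wsum_supset p {a}, card_singleton, pow_one]

lemma wsum_card_expect (p : ℝ) :
    ∑ S ∈ (univ : Finset α).powerset, wt p univ S * (S.card : ℝ)
      = (Fintype.card α : ℝ) * p := by
  have h1 : ∀ S : Finset α, (S.card : ℝ) = ∑ a : α, (if a ∈ S then (1:ℝ) else 0) := by
    intro S
    rw [Finset.sum_ite_mem, univ_inter, Finset.sum_const, nsmul_eq_mul, mul_one]
  calc ∑ S ∈ (univ : Finset α).powerset, wt p univ S * (S.card : ℝ)
      = ∑ S ∈ (univ : Finset α).powerset, ∑ a : α, (if a ∈ S then wt p univ S else 0) := by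
        apply Finset.sum_congr rfl
        intro S _
        rw [h1, Finset.mul_sum]
        apply Finset.sum_congr rfl
        intro a _
        by_cases h : a ∈ S <;> simp [h]
    _ = ∑ a : α, ∑ S ∈ (univ : Finset α).powerset, (if a ∈ S then wt p univ S else 0) :=
        Finset.sum_comm
    _ = ∑ _a : α, p := by
        apply Finset.sum_congr rfl
        intro a _
        exact wsum_mem p a
    _ = (Fintype.card α : ℝ) * p := by
        rw [Finset.sum_const, nsmul_eq_mul, card_univ]

omit [Fintype α] in
lemma wt_nonneg (hp0 : 0 ≤ p) (hp1 : p ≤ 1) (s S : Finset α) : 0 ≤ wt p s S := by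
  apply mul_nonneg (pow_nonneg hp0 _) (pow_nonneg (by linarith) _)


def pairOf (u v : Fin m ⊕ Fin n) (d : Fin m × Fin n) : Fin m × Fin n :=
  match u, v with
  | Sum.inl a, Sum.inr b => (a, b)
  | Sum.inr b, Sum.inl a => (a, b)
  | _, _ => d

lemma pairOf_mem {S : Finset (Fin m × Fin n)} {u v : Fin m ⊕ Fin n}
    (h : (bip m n S).Adj u v) (d : Fin m × Fin n) : pairOf u v d ∈ S := by
  rcases bip_adj_cases h with ⟨a, b, hab, ⟨h1, h2⟩ | ⟨h1, h2⟩⟩ <;> subst h1 <;> subst h2 <;>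
    simpa [pairOf] using hab

lemma pairOf_pair {S S' : Finset (Fin m × Fin n)} {u v u' v' : Fin m ⊕ Fin n}
    (h : (bip m n S).Adj u v) (h' : (bip m n S').Adj u' v') (d : Fin m × Fin n)
    (heq : pairOf u v d = pairOf u' v' d) :
    (u = u' ∧ v = v') ∨ (u = v' ∧ v = u') := by
  rcases bip_adj_cases h with ⟨a, b, _, ⟨h1, h2⟩ | ⟨h1, h2⟩⟩ <;>
    rcases bip_adj_cases h' with ⟨a', b', _, ⟨h1', h2'⟩ | ⟨h1', h2'⟩⟩ <;>
    subst h1 <;> subst h2 <;> subst h1' <;> subst h2' <;>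
    simp [pairOf, Prod.ext_iff] at heq <;>
    simp [heq.1, heq.2]

def IsCopy (t ℓ : ℕ) (f : (Bool ⊕ Fin t × Fin (ℓ - 1)) → Fin m ⊕ Fin n)
    (S : Finset (Fin m × Fin n)) : Prop :=
  Function.Injective f ∧ ∀ x y, (thetaGraph t ℓ).Adj x y → (bip m n S).Adj (f x) (f y)

def alignedSet (m n t ℓ : ℕ) :
    Finset ((Bool ⊕ Fin t × Fin (ℓ - 1)) → Fin m ⊕ Fin n) :=
  univ.filter fun f =>
    (∀ v, sideOf (f v) = cls v) ∨ (∀ v, sideOf (f v) = !(cls v))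

open scoped Classical in
noncomputable def copies (m n t ℓ : ℕ) (S : Finset (Fin m × Fin n)) :
    Finset ((Bool ⊕ Fin t × Fin (ℓ - 1)) → Fin m ⊕ Fin n) :=
  (alignedSet m n t ℓ).filter fun f => IsCopy t ℓ f S

lemma copy_mem_aligned (hℓ : 3 ≤ ℓ) (hodd : ℓ % 2 = 1) (ht : 0 < t)
    {f : (Bool ⊕ Fin t × Fin (ℓ - 1)) → Fin m ⊕ Fin n} {S : Finset (Fin m × Fin n)}
    (h : IsCopy t ℓ f S) : f ∈ alignedSet m n t ℓ := by
  have key := copy_aligned hℓ hodd ht f S h.2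
  rw [alignedSet, mem_filter]
  refine ⟨mem_univ _, ?_⟩
  cases hb : sideOf (f (Sum.inl false)) with
  | false =>
    left; intro v; have := key v; rw [hb] at this; simpa using this
  | true =>
    right; intro v; have := key v; rw [hb] at this; simpa using this

lemma copy_mem_copies (hℓ : 3 ≤ ℓ) (hodd : ℓ % 2 = 1) (ht : 0 < t)
    {f : (Bool ⊕ Fin t × Fin (ℓ - 1)) → Fin m ⊕ Fin n} {S : Finset (Fin m × Fin n)}
    (h : IsCopy t ℓ f S) : f ∈ copies m n t ℓ S := by
  classical
  rw [copies, mem_filter]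
  exact ⟨copy_mem_aligned hℓ hodd ht h, h⟩

/-- the `t·ℓ` cross pairs used by a copy -/
def edgeImg (f : (Bool ⊕ Fin t × Fin (ℓ - 1)) → Fin m ⊕ Fin n) (d : Fin m × Fin n) :
    Finset (Fin m × Fin n) :=
  image (fun x : Fin t × Fin ℓ => pairOf (f (eA ℓ x.1 x.2)) (f (eB ℓ x.1 x.2)) d) univ

lemma edgeImg_subset (hℓ : 3 ≤ ℓ)
    {f : (Bool ⊕ Fin t × Fin (ℓ - 1)) → Fin m ⊕ Fin n} {S : Finset (Fin m × Fin n)}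
    (h : IsCopy t ℓ f S) (d : Fin m × Fin n) : edgeImg f d ⊆ S := by
  intro e he
  rw [edgeImg, mem_image] at he
  obtain ⟨x, _, hx⟩ := he
  rw [← hx]
  exact pairOf_mem (h.2 _ _ (theta_adj hℓ x.1 x.2)) d

lemma edgeImg_card (hℓ : 3 ≤ ℓ)
    {f : (Bool ⊕ Fin t × Fin (ℓ - 1)) → Fin m ⊕ Fin n} {S : Finset (Fin m × Fin n)}
    (h : IsCopy t ℓ f S) (d : Fin m × Fin n) : (edgeImg f d).card = t * ℓ := by
  rw [edgeImg, Finset.card_image_of_injOn, card_univ, Fintype.card_prod,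
    Fintype.card_fin, Fintype.card_fin]
  intro x _ x' _ heq
  have hx : (bip m n S).Adj (f (eA ℓ x.1 x.2)) (f (eB ℓ x.1 x.2)) :=
    h.2 _ _ (theta_adj hℓ x.1 x.2)
  have hx' : (bip m n S).Adj (f (eA ℓ x'.1 x'.2)) (f (eB ℓ x'.1 x'.2)) :=
    h.2 _ _ (theta_adj hℓ x'.1 x'.2)
  have := pairOf_pair hx hx' d heq
  have hcases : (eA ℓ x.1 x.2 = eA ℓ x'.1 x'.2 ∧ eB ℓ x.1 x.2 = eB ℓ x'.1 x'.2) ∨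
      (eA ℓ x.1 x.2 = eB ℓ x'.1 x'.2 ∧ eB ℓ x.1 x.2 = eA ℓ x'.1 x'.2) := by
    rcases this with ⟨ha, hb⟩ | ⟨ha, hb⟩
    · exact Or.inl ⟨h.1 ha, h.1 hb⟩
    · exact Or.inr ⟨h.1 ha, h.1 hb⟩
  have := eAB_inj hℓ x.1 x'.1 x.2 x'.2 hcases
  exact Prod.ext this.1 this.2

lemma aligned_card_le (hm : 0 < m) (hn : 0 < n) (q : ℕ) (h : ℓ - 1 = 2 * q) :
    ((alignedSet m n t ℓ).card : ℝ) ≤ 2 * ((m : ℝ) * n) ^ (1 + t * q) := by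
  have h1 : alignedSet m n t ℓ =
      (univ.filter fun f : (Bool ⊕ Fin t × Fin (ℓ - 1)) → Fin m ⊕ Fin n =>
        ∀ v, sideOf (f v) = cls v) ∪
      (univ.filter fun f => ∀ v, sideOf (f v) = !(cls v)) := by
    rw [alignedSet, filter_or]
  have c1 := card_filter_side hm hn (cls (t := t) (ℓ := ℓ))
  have c2 := card_filter_side hm hn (fun v => !(cls (t := t) (ℓ := ℓ) v))
  rw [card_cls_false q h, card_cls_true q h] at c1
  simp only [Bool.not_eq_true', Bool.not_eq_false'] at c2
  rw [card_cls_false q h, card_cls_true q h] at c2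
  have hcard : (alignedSet m n t ℓ).card ≤
      m ^ (1 + t * q) * n ^ (1 + t * q) + m ^ (1 + t * q) * n ^ (1 + t * q) := by
    rw [h1]
    calc _ ≤ _ := card_union_le _ _
    _ ≤ m ^ (1 + t * q) * n ^ (1 + t * q) + m ^ (1 + t * q) * n ^ (1 + t * q) :=
        Nat.add_le_add c1 (by rw [Nat.mul_comm (m ^ (1 + t * q))] at c2 ⊢; exact c2)
  calc ((alignedSet m n t ℓ).card : ℝ)
      ≤ ((m ^ (1 + t * q) * n ^ (1 + t * q) + m ^ (1 + t * q) * n ^ (1 + t * q) : ℕ) : ℝ) := by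
        exact_mod_cast hcard
    _ = 2 * ((m : ℝ) * n) ^ (1 + t * q) := by push_cast; ring

lemma copies_expect (hℓ : 3 ≤ ℓ) {p : ℝ} (hp0 : 0 ≤ p) (hp1 : p ≤ 1) (d : Fin m × Fin n) :
    ∑ S ∈ (univ : Finset (Fin m × Fin n)).powerset,
        wt p univ S * ((copies m n t ℓ S).card : ℝ)
      ≤ ((alignedSet m n t ℓ).card : ℝ) * p ^ (t * ℓ) := by
  classical
  have hcard : ∀ S : Finset (Fin m × Fin n), ((copies m n t ℓ S).card : ℝ)
      = ∑ f ∈ alignedSet m n t ℓ, (if IsCopy t ℓ f S then (1:ℝ) else 0) := by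
    intro S
    rw [copies, Finset.card_filter]
    push_cast
    apply Finset.sum_congr rfl
    intro f _
    split_ifs <;> simp
  calc ∑ S ∈ (univ : Finset (Fin m × Fin n)).powerset,
        wt p univ S * ((copies m n t ℓ S).card : ℝ)
      = ∑ S ∈ (univ : Finset (Fin m × Fin n)).powerset, ∑ f ∈ alignedSet m n t ℓ,
          (if IsCopy t ℓ f S then wt p univ S else 0) := by
        apply Finset.sum_congr rfl
        intro S _
        rw [hcard, Finset.mul_sum]
        apply Finset.sum_congr rfl
        intro f _
        split_ifs <;> simp
    _ = ∑ f ∈ alignedSet m n t ℓ, ∑ S ∈ (univ : Finset (Fin m × Fin n)).powerset,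
          (if IsCopy t ℓ f S then wt p univ S else 0) := Finset.sum_comm
    _ ≤ ∑ _f ∈ alignedSet m n t ℓ, p ^ (t * ℓ) := by
        apply Finset.sum_le_sum
        intro f _
        by_cases hex : ∃ S₀ : Finset (Fin m × Fin n), IsCopy t ℓ f S₀
        · obtain ⟨S₀, hS₀⟩ := hex
          calc ∑ S ∈ (univ : Finset (Fin m × Fin n)).powerset,
                (if IsCopy t ℓ f S then wt p univ S else 0)
              ≤ ∑ S ∈ (univ : Finset (Fin m × Fin n)).powerset,
                (if edgeImg f d ⊆ S then wt p univ S else 0) := by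
                apply Finset.sum_le_sum
                intro S _
                split_ifs with h1 h2 h2
                · exact le_refl _
                · exact absurd (edgeImg_subset hℓ h1 d) h2
                · exact wt_nonneg hp0 hp1 _ _
                · exact le_refl _
            _ = p ^ (edgeImg f d).card := by
                rw [← wsum_supset p (edgeImg f d), Finset.sum_filter]
            _ = p ^ (t * ℓ) := by rw [edgeImg_card hℓ hS₀ d]
        · have : ∀ S ∈ (univ : Finset (Fin m × Fin n)).powerset,
              (if IsCopy t ℓ f S then wt p univ S else 0) = 0 := by
            intro S _
            rw [if_neg (fun h => hex ⟨S, h⟩)]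
          rw [Finset.sum_congr rfl this, Finset.sum_const, smul_zero]
          exact pow_nonneg hp0 _
    _ = ((alignedSet m n t ℓ).card : ℝ) * p ^ (t * ℓ) := by
        rw [Finset.sum_const, nsmul_eq_mul]

lemma delete_copies (hℓ : 3 ≤ ℓ) (hodd : ℓ % 2 = 1) (ht : 0 < t) (hm : 0 < m) (hn : 0 < n)
    (S : Finset (Fin m × Fin n)) :
    ∃ S' : Finset (Fin m × Fin n),
      (S.card : ℝ) - ((copies m n t ℓ S).card : ℝ) ≤ (S'.card : ℝ) ∧
      ¬ ContainsCopy (thetaGraph t ℓ) (bip m n S') := by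
  classical
  have hℓ0 : 0 < ℓ := by omega
  set d : Fin m × Fin n := (⟨0, hm⟩, ⟨0, hn⟩) with hd
  set i0 : Fin t := ⟨0, ht⟩ with hi0
  set j0 : Fin ℓ := ⟨0, hℓ0⟩ with hj0
  set D := (copies m n t ℓ S).image
    (fun f => pairOf (f (eA ℓ i0 j0)) (f (eB ℓ i0 j0)) d) with hD
  refine ⟨S \ D, ?_, ?_⟩
  · have h1 : S.card ≤ (S \ D).card + D.card := Finset.card_le_card_sdiff_add_card
    have h2 : D.card ≤ (copies m n t ℓ S).card := card_image_le
    have h3 : S.card ≤ (S \ D).card + (copies m n t ℓ S).card :=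
      le_trans h1 (Nat.add_le_add_left h2 _)
    have := (Nat.cast_le (α := ℝ)).2 h3
    push_cast at this
    linarith
  · rintro ⟨f, hinj, hadj⟩
    have hcopyS : IsCopy t ℓ f S :=
      ⟨hinj, fun x y h => bip_mono sdiff_subset (hadj x y h)⟩
    have hfmem : f ∈ copies m n t ℓ S := copy_mem_copies hℓ hodd ht hcopyS
    have hadj0 : (bip m n (S \ D)).Adj (f (eA ℓ i0 j0)) (f (eB ℓ i0 j0)) :=
      hadj _ _ (theta_adj hℓ i0 j0)
    have hmem := pairOf_mem hadj0 d
    have hinD : pairOf (f (eA ℓ i0 j0)) (f (eB ℓ i0 j0)) d ∈ D := mem_image_of_mem _ hfmem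
    rw [mem_sdiff] at hmem
    exact hmem.2 hinD

lemma main_exists (hℓ : 3 ≤ ℓ) (hodd : ℓ % 2 = 1) (ht : 0 < t) (hm : 0 < m) (hn : 0 < n)
    {p : ℝ} (hp0 : 0 ≤ p) (hp1 : p ≤ 1) :
    ∃ S' : Finset (Fin m × Fin n),
      ((m : ℝ) * n) * p - ((alignedSet m n t ℓ).card : ℝ) * p ^ (t * ℓ) ≤ (S'.card : ℝ) ∧
      ¬ ContainsCopy (thetaGraph t ℓ) (bip m n S') := by
  classical
  set val : Finset (Fin m × Fin n) → ℝ :=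
    fun S => (S.card : ℝ) - ((copies m n t ℓ S).card : ℝ) with hval
  have hsum : ((m : ℝ) * n) * p - ((alignedSet m n t ℓ).card : ℝ) * p ^ (t * ℓ)
      ≤ ∑ S ∈ (univ : Finset (Fin m × Fin n)).powerset, wt p univ S * val S := by
    have hsplit : ∑ S ∈ (univ : Finset (Fin m × Fin n)).powerset, wt p univ S * val S
        = (∑ S ∈ (univ : Finset (Fin m × Fin n)).powerset, wt p univ S * (S.card : ℝ))
          - ∑ S ∈ (univ : Finset (Fin m × Fin n)).powerset,
              wt p univ S * ((copies m n t ℓ S).card : ℝ) := by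
      rw [← Finset.sum_sub_distrib]
      apply Finset.sum_congr rfl
      intro S _
      rw [hval]; ring
    rw [hsplit, wsum_card_expect p]
    have hcard : ((Fintype.card (Fin m × Fin n) : ℕ) : ℝ) = (m : ℝ) * n := by
      rw [Fintype.card_prod, Fintype.card_fin, Fintype.card_fin]; push_cast; ring
    rw [hcard]
    have := copies_expect (m := m) (n := n) (t := t) (ℓ := ℓ) hℓ hp0 hp1 (⟨0, hm⟩, ⟨0, hn⟩)
    linarith
  have hne : ((univ : Finset (Fin m × Fin n)).powerset).Nonempty := ⟨∅, by simp⟩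
  obtain ⟨S₀, hS₀mem, hS₀max⟩ := Finset.exists_max_image _ val hne
  have hselect : ∑ S ∈ (univ : Finset (Fin m × Fin n)).powerset, wt p univ S * val S
      ≤ val S₀ := by
    calc ∑ S ∈ (univ : Finset (Fin m × Fin n)).powerset, wt p univ S * val S
        ≤ ∑ S ∈ (univ : Finset (Fin m × Fin n)).powerset, wt p univ S * val S₀ := by
          apply Finset.sum_le_sum
          intro S hS
          exact mul_le_mul_of_nonneg_left (hS₀max S hS) (wt_nonneg hp0 hp1 _ _)
      _ = (∑ S ∈ (univ : Finset (Fin m × Fin n)).powerset, wt p univ S) * val S₀ := by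
          rw [← Finset.sum_mul]
      _ = val S₀ := by rw [wsum_base, one_mul]
  obtain ⟨S', hS'1, hS'2⟩ := delete_copies hℓ hodd ht hm hn S₀
  exact ⟨S', le_trans (le_trans hsum hselect) hS'1, hS'2⟩

lemma card_le_ncard_edgeSet (S : Finset (Fin m × Fin n)) :
    (S.card : ℝ) ≤ ((bip m n S).edgeSet.ncard : ℝ) := by
  classical
  have hinj : Function.Injective
      (fun e : Fin m × Fin n => s(Sum.inl e.1, (Sum.inr e.2 : Fin m ⊕ Fin n))) := by
    intro e e' heq
    rw [Sym2.eq_iff] at heq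
    rcases heq with ⟨h1, h2⟩ | ⟨h1, h2⟩
    · exact Prod.ext (Sum.inl.inj h1) (Sum.inr.inj h2)
    · exact absurd h1 (by simp)
  have hsub : ↑(S.image (fun e : Fin m × Fin n =>
      s(Sum.inl e.1, (Sum.inr e.2 : Fin m ⊕ Fin n)))) ⊆ (bip m n S).edgeSet := by
    intro x hx
    simp only [coe_image, Set.mem_image, mem_coe] at hx
    obtain ⟨e, he, rfl⟩ := hx
    rw [SimpleGraph.mem_edgeSet]
    exact bip_adj_inl_inr.2 (by simpa using he)
  have h1 : (S.image (fun e : Fin m × Fin n =>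
      s(Sum.inl e.1, (Sum.inr e.2 : Fin m ⊕ Fin n)))).card = S.card :=
    Finset.card_image_of_injective _ hinj
  have h2 := Set.ncard_le_ncard hsub (Set.toFinite _)
  rw [Set.ncard_coe_finset, h1] at h2
  exact_mod_cast h2

lemma exponent_ineq (ε : ℝ) (hε : 0 < ε) (q t ℓ : ℕ) (hq1 : 1 ≤ q) (hq : ℓ = 2*q+1)
    (ht3 : 3 ≤ t) (htε : 1/ε ≤ (t:ℝ)) :
    ((ℓ:ℝ)+1)/(2*ℓ) - ε ≤ 1 - ((t:ℝ)*q)/((t:ℝ)*ℓ - 1) := by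
  set T := (t:ℝ) with hT
  set L := (ℓ:ℝ) with hLdef
  set Q := (q:ℝ) with hQ
  have hL : L = 2*Q+1 := by rw [hLdef, hQ, hq]; push_cast; ring
  have hQ1 : (1:ℝ) ≤ Q := by rw [hQ]; exact_mod_cast hq1
  have hT3 : (3:ℝ) ≤ T := by rw [hT]; exact_mod_cast ht3
  have hL3 : (3:ℝ) ≤ L := by rw [hL]; linarith
  have hL0 : (0:ℝ) < L := by linarith
  have hden : (0:ℝ) < T*L - 1 := by nlinarith
  have hεT : 1 ≤ T * ε := (div_le_iff₀ hε).mp htε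
  have h2T : 2*T ≤ T*L - 1 := by nlinarith
  have hε2 : 2 ≤ ε * (T*L - 1) := by nlinarith [mul_le_mul_of_nonneg_left h2T hε.le]
  have hQLdiv : Q / L ≤ 1 := by rw [div_le_one hL0]; linarith
  have huL : Q / L * L = Q := div_mul_cancel₀ _ (ne_of_gt hL0)
  have hprod : Q/L*(T*L) = T*Q := by
    rw [show Q/L*(T*L) = T*(Q/L*L) by ring, huL]
  have key : T*Q/(T*L-1) ≤ Q/L + ε := by
    rw [div_le_iff₀ hden]
    nlinarith [hprod, hQLdiv, hε2]
  have hhalf : (L+1)/(2*L) = 1 - Q/L := by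
    field_simp
    rw [hL]; ring
  rw [hhalf]
  linarith

end ZLower

/-- For every `ε > 0` and odd `ℓ ≥ 2` there is `t₀` so that for `t ≥ t₀` and all
sufficiently large `m ≤ n` there is an `m` by `n` bipartite `θ_{t,ℓ}`-free graph with at
least `c (mn)^{(ℓ+1)/(2ℓ) − ε}` edges, i.e. `z(m,n,θ_{t,ℓ}) ≥ c (mn)^{(ℓ+1)/(2ℓ) − ε}`. -/
theorem stmt_15 (ε : ℝ) (hε : 0 < ε) (ℓ : ℕ) (hℓ : 2 ≤ ℓ) (hodd : Odd ℓ) :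
    ∃ t₀ : ℕ, ∀ t : ℕ, t₀ ≤ t → ∃ c : ℝ, 0 < c ∧ ∃ N : ℕ, ∀ m n : ℕ, N ≤ m → m ≤ n →
      ∃ G : SimpleGraph (Fin m ⊕ Fin n),
        (∀ i j : Fin m, ¬ G.Adj (Sum.inl i) (Sum.inl j)) ∧
        (∀ i j : Fin n, ¬ G.Adj (Sum.inr i) (Sum.inr j)) ∧
        ¬ ContainsCopy (thetaGraph t ℓ) G ∧
        c * ((m : ℝ) * n) ^ (((ℓ : ℝ) + 1) / (2 * ℓ) - ε) ≤ (G.edgeSet.ncard : ℝ) := by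
  classical
  open ZLower in
  obtain ⟨q, hq⟩ := hodd
  have hq1 : 1 ≤ q := by omega
  have hℓ3 : 3 ≤ ℓ := by omega
  have hℓmod : ℓ % 2 = 1 := by omega
  refine ⟨⌈1/ε⌉₊ + 3, fun t ht => ⟨1/8, by norm_num, 1, fun m n hm1 hmn => ?_⟩⟩
  have ht3 : 3 ≤ t := by omega
  have ht0 : 0 < t := by omega
  have hm : 0 < m := hm1
  have hn : 0 < n := lt_of_lt_of_le hm hmn
  -- real setup
  set Z : ℝ := (m : ℝ) * n with hZdef
  have hm1' : (1:ℝ) ≤ (m:ℝ) := by exact_mod_cast hm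
  have hn1' : (1:ℝ) ≤ (n:ℝ) := by exact_mod_cast hn
  have hZ1 : 1 ≤ Z := by rw [hZdef]; nlinarith
  have hZ0 : (0:ℝ) < Z := by linarith
  have htl9 : 9 ≤ t * ℓ := le_trans (by norm_num) (Nat.mul_le_mul ht3 hℓ3)
  have htl9' : (9:ℝ) ≤ (t:ℝ) * ℓ := by exact_mod_cast htl9
  set β : ℝ := ((t:ℝ)*q)/((t:ℝ)*ℓ - 1) with hβdef
  have hden : (0:ℝ) < (t:ℝ)*ℓ - 1 := by linarith
  have hβ0 : 0 ≤ β := by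
    rw [hβdef]
    apply div_nonneg _ hden.le
    positivity
  set p : ℝ := (1/4) * Z ^ (-β) with hpdef
  have hrp0 : (0:ℝ) < Z ^ (-β) := Real.rpow_pos_of_pos hZ0 _
  have hp0 : 0 ≤ p := by rw [hpdef]; positivity
  have hZneg : Z ^ (-β) ≤ 1 := Real.rpow_le_one_of_one_le_of_nonpos hZ1 (neg_nonpos.2 hβ0)
  have hp1 : p ≤ 1 := by rw [hpdef]; nlinarith
  -- construction
  obtain ⟨S', hS'card, hS'free⟩ :=
    main_exists (m := m) (n := n) hℓ3 hℓmod ht0 hm hn hp0 hp1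
  refine ⟨bip m n S', fun i j => bip_not_adj_inl i j, fun i j => bip_not_adj_inr i j,
    hS'free, ?_⟩
  -- numeric bounds
  have hβeq : β * ((t:ℝ)*ℓ - 1) = (t:ℝ)*q := by
    rw [hβdef, div_mul_cancel₀ _ (ne_of_gt hden)]
  have hZp : Z * p = (1/4) * Z ^ ((1:ℝ) - β) := by
    have h1 : Z ^ ((1:ℝ) - β) = Z ^ (1:ℝ) * Z ^ (-β) := by
      rw [← Real.rpow_add hZ0]; ring_nf
    rw [hpdef, h1, Real.rpow_one]; ring
  have hA := aligned_card_le (t := t) hm hn q (by omega : ℓ - 1 = 2*q)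
  have hApow : ((alignedSet m n t ℓ).card : ℝ) * p ^ (t*ℓ) ≤ (1/8) * Z ^ ((1:ℝ) - β) := by
    have hppow : p ^ (t*ℓ) = (1/4)^(t*ℓ) * Z ^ (-β * ((t*ℓ : ℕ):ℝ)) := by
      rw [hpdef, mul_pow]
      congr 1
      rw [← Real.rpow_natCast (Z ^ (-β)) (t*ℓ), ← Real.rpow_mul hZ0.le]
    have hZnat : (Z : ℝ) ^ (1 + t*q) = Z ^ (((1 + t*q : ℕ)):ℝ) := by
      rw [Real.rpow_natCast]
    have hexp : (((1 + t*q : ℕ)):ℝ) + (-β * ((t*ℓ : ℕ):ℝ)) = (1:ℝ) - β := by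
      push_cast
      linear_combination -hβeq
    have hcomb : Z ^ (((1 + t*q : ℕ)):ℝ) * Z ^ (-β * ((t*ℓ : ℕ):ℝ)) = Z ^ ((1:ℝ) - β) := by
      rw [← Real.rpow_add hZ0, hexp]
    have hconst : (2:ℝ) * (1/4)^(t*ℓ) ≤ 1/8 := by
      have h2 : ((1:ℝ)/4)^(t*ℓ) ≤ (1/4)^(2:ℕ) :=
        pow_le_pow_of_le_one (by norm_num) (by norm_num) (by omega)
      norm_num at h2 ⊢
      linarith
    have hppos : (0:ℝ) ≤ p ^ (t*ℓ) := pow_nonneg hp0 _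
    have hZpow0 : (0:ℝ) < Z ^ ((1:ℝ) - β) := Real.rpow_pos_of_pos hZ0 _
    calc ((alignedSet m n t ℓ).card : ℝ) * p ^ (t*ℓ)
        ≤ (2 * Z ^ (1 + t*q)) * p ^ (t*ℓ) := mul_le_mul_of_nonneg_right hA hppos
      _ = 2 * (1/4)^(t*ℓ) * (Z ^ (((1 + t*q : ℕ)):ℝ) * Z ^ (-β * ((t*ℓ : ℕ):ℝ))) := by
          rw [hppow, ← hZnat]; ring
      _ = 2 * (1/4)^(t*ℓ) * Z ^ ((1:ℝ) - β) := by rw [hcomb]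
      _ ≤ (1/8) * Z ^ ((1:ℝ) - β) := mul_le_mul_of_nonneg_right hconst hZpow0.le
  -- lower bound on edges of S'
  have hS'lower : (1/8) * Z ^ ((1:ℝ) - β) ≤ (S'.card : ℝ) := by
    have := hS'card
    rw [hZdef] at hZp
    calc (1/8) * Z ^ ((1:ℝ) - β)
        = (1/4) * Z ^ ((1:ℝ) - β) - (1/8) * Z ^ ((1:ℝ) - β) := by ring
      _ ≤ ((m:ℝ) * n) * p - ((alignedSet m n t ℓ).card : ℝ) * p ^ (t*ℓ) := by
          rw [← hZp]
          have : ((alignedSet m n t ℓ).card : ℝ) * p ^ (t*ℓ) ≤ (1/8) * Z ^ ((1:ℝ) - β) := hApow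
          rw [hZdef]
          linarith
      _ ≤ (S'.card : ℝ) := hS'card
  -- exponent comparison
  have hexp2 : ((ℓ:ℝ)+1)/(2*ℓ) - ε ≤ (1:ℝ) - β := by
    rw [hβdef]
    apply exponent_ineq ε hε q t ℓ hq1 (by omega) ht3
    calc 1/ε ≤ (⌈1/ε⌉₊ : ℝ) := Nat.le_ceil _
      _ ≤ (t:ℝ) := by exact_mod_cast le_trans (Nat.le_add_right _ 3) ht
  have hmono : Z ^ (((ℓ:ℝ)+1)/(2*ℓ) - ε) ≤ Z ^ ((1:ℝ) - β) :=
    Real.rpow_le_rpow_of_exponent_le hZ1 hexp2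
  have hedge : (S'.card : ℝ) ≤ ((bip m n S').edgeSet.ncard : ℝ) := card_le_ncard_edgeSet S'
  calc (1/8) * ((m : ℝ) * n) ^ (((ℓ : ℝ) + 1) / (2 * ℓ) - ε)
      ≤ (1/8) * Z ^ ((1:ℝ) - β) := by
        rw [hZdef]
        have := hmono
        rw [hZdef] at this
        linarith
    _ ≤ (S'.card : ℝ) := hS'lower
    _ ≤ ((bip m n S').edgeSet.ncard : ℝ) := hedge
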